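/- Let φ ∈ C²(ℝ^n), u ∈ U fixed, and suppose for x ∈ ℝ^n the matrix A with entries a_{ij} = ⟨σ^i(x,u), D_x⟨σ^j(·,u), Dφ(·)⟩(x)⟩ is symmetric negative semidefinite and ⟨b̃(x,u), Dφ(x)⟩ ≤ 0, where b̃(x,u) = b(x,u) − (1/2) Σ_i ⟨D_xσ^i(x,u), σ^i(x,u)⟩. Then ⟨b(x,u), Dφ(x)⟩ + (1/2) tr(D²φ(x) σ(x,u) σ*(x,u)) ≤ 0. -/

import Mathlib

open Matrix

theorem stmt_17 {n d : ℕ} (φ : (Fin n → ℝ) → ℝ) (hφ : ContDiff ℝ 2 φ)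
    (σc : Fin d → (Fin n → ℝ) → (Fin n → ℝ)) (hσ : ∀ i, Differentiable ℝ (σc i))
    (b x : Fin n → ℝ)
    (A : Matrix (Fin d) (Fin d) ℝ)
    (hA : ∀ i j, A i j = fderiv ℝ (fun y => fderiv ℝ φ y (σc j y)) x (σc i x))
    (hAsymm : A.IsSymm) (hAneg : ∀ z : Fin d → ℝ, z ⬝ᵥ A.mulVec z ≤ 0)
    (hdrift : fderiv ℝ φ x
        (b - (1 / 2 : ℝ) • ∑ i, fderiv ℝ (σc i) x (σc i x)) ≤ 0) :
    fderiv ℝ φ x b +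
        (1 / 2) * ∑ i, fderiv ℝ (fderiv ℝ φ) x (σc i x) (σc i x) ≤ 0 := by
  have hD : Differentiable ℝ (fderiv ℝ φ) := by
    have : ContDiff ℝ 1 (fderiv ℝ φ) := hφ.fderiv_right (by norm_num)
    exact this.differentiable (by norm_num)
  have key : ∀ i : Fin d, A i i = fderiv ℝ (fderiv ℝ φ) x (σc i x) (σc i x)
      + fderiv ℝ φ x (fderiv ℝ (σc i) x (σc i x)) := by
    intro i
    rw [hA, fderiv_clm_apply (hD.differentiableAt) ((hσ i).differentiableAt)]
    simp [add_comm]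
  have hdiag : ∀ i : Fin d, A i i ≤ 0 := by
    intro i
    have h := hAneg (Pi.single i 1)
    simpa [Matrix.mulVec, dotProduct, Pi.single_apply] using h
  have hsum : ∑ i, A i i ≤ 0 := Finset.sum_nonpos fun i _ => hdiag i
  have h1 : ∑ i, A i i = (∑ i, fderiv ℝ (fderiv ℝ φ) x (σc i x) (σc i x))
      + ∑ i, fderiv ℝ φ x (fderiv ℝ (σc i) x (σc i x)) := by
    rw [← Finset.sum_add_distrib]
    exact Finset.sum_congr rfl fun i _ => key i
  have hlin : fderiv ℝ φ x (b - (1 / 2 : ℝ) • ∑ i, fderiv ℝ (σc i) x (σc i x))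
      = fderiv ℝ φ x b
        - (1 / 2) * ∑ i, fderiv ℝ φ x (fderiv ℝ (σc i) x (σc i x)) := by
    simp [map_sub, _root_.map_smul, map_sum, smul_eq_mul]
  rw [hlin] at hdrift
  linarith
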